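/- Let a₁ ≤ a₂ ≤ ⋯ ≤ a_m and b₁ ≤ ⋯ ≤ b_n be numbers in (0,1], and c_{ij} values with min(a_i, b_j) ≤ c_{ij} ≤ max(a_i, b_j) for all i,j. Then for any 0 ≤ ν₀ ≤ m and 0 ≤ ν₁ ≤ n with the property that ν₀ + ν₁ is realized by the merge ordering (i.e. there is t with a_{ν₀} < t < a_{ν₀+1} and b_{ν₁} < t < b_{ν₁+1}, boundary cases interpreted appropriately), one has ∑_{i=1}^{m} ∑_{j=1}^{n} log c_{ij} ≤ ν₁ ∑_{i=ν₀+1}^{m} log a_i + ν₀ ∑_{j=ν₁+1}^{n} log b_j. -/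

import Mathlib

/-- For sorted `a` (length `m`), `b` (length `n`) in `(0,1]` and a matrix
`c` with `min(aᵢ,bⱼ) ≤ cᵢⱼ ≤ max(aᵢ,bⱼ)`, and `(ν₀,ν₁)` realized by the merge ordering,
`∑∑ log cᵢⱼ ≤ ν₁ ∑_{i>ν₀} log aᵢ + ν₀ ∑_{j>ν₁} log bⱼ`. -/
theorem stmt13 (m n : ℕ) (a b : ℕ → ℝ) (c : ℕ → ℕ → ℝ)
    (ha : ∀ i < m, 0 < a i ∧ a i ≤ 1) (hb : ∀ j < n, 0 < b j ∧ b j ≤ 1)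
    (hamono : ∀ i j, i ≤ j → j < m → a i ≤ a j)
    (hbmono : ∀ i j, i ≤ j → j < n → b i ≤ b j)
    (hc : ∀ i < m, ∀ j < n, min (a i) (b j) ≤ c i j ∧ c i j ≤ max (a i) (b j))
    (ν₀ ν₁ : ℕ) (hν₀ : ν₀ ≤ m) (hν₁ : ν₁ ≤ n)
    (hsep : ∃ T : ℝ, (∀ i < ν₀, a i < T) ∧ (∀ i, ν₀ ≤ i → i < m → T < a i) ∧
                     (∀ j < ν₁, b j < T) ∧ (∀ j, ν₁ ≤ j → j < n → T < b j)) :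
    ∑ i ∈ Finset.range m, ∑ j ∈ Finset.range n, Real.log (c i j) ≤
      (ν₁ : ℝ) * ∑ i ∈ Finset.Ico ν₀ m, Real.log (a i) +
      (ν₀ : ℝ) * ∑ j ∈ Finset.Ico ν₁ n, Real.log (b j) := by
  obtain ⟨T, h1, h2, h3, h4⟩ := hsep
  have hcpos : ∀ i < m, ∀ j < n, 0 < c i j := fun i hi j hj =>
    lt_of_lt_of_le (lt_min (ha i hi).1 (hb j hj).1) (hc i hi j hj).1
  have hclog0 : ∀ i < m, ∀ j < n, Real.log (c i j) ≤ 0 := fun i hi j hj =>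
    Real.log_nonpos (le_of_lt (hcpos i hi j hj))
      (le_trans (hc i hi j hj).2 (max_le (ha i hi).2 (hb j hj).2))
  have key : ∀ i ∈ Finset.range m, ∑ j ∈ Finset.range n, Real.log (c i j) ≤
      (if i < ν₀ then ∑ j ∈ Finset.Ico ν₁ n, Real.log (b j) else (ν₁:ℝ) * Real.log (a i)) := by
    intro i hi
    rw [Finset.mem_range] at hi
    rw [← Finset.sum_range_add_sum_Ico _ hν₁]
    by_cases hiν : i < ν₀
    · simp only [if_pos hiν]
      have first : ∑ j ∈ Finset.range ν₁, Real.log (c i j) ≤ 0 :=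
        Finset.sum_nonpos fun j hj => hclog0 i hi j (lt_of_lt_of_le (Finset.mem_range.mp hj) hν₁)
      have second : ∑ j ∈ Finset.Ico ν₁ n, Real.log (c i j) ≤
          ∑ j ∈ Finset.Ico ν₁ n, Real.log (b j) := by
        apply Finset.sum_le_sum
        intro j hj
        rw [Finset.mem_Ico] at hj
        have hab : a i < b j := (h1 i hiν).trans (h4 j hj.1 hj.2)
        have h := (hc i hi j hj.2).2
        rw [max_eq_right hab.le] at h
        exact Real.log_le_log (hcpos i hi j hj.2) h
      linarith
    · simp only [if_neg hiν]
      push_neg at hiν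
      have first : ∑ j ∈ Finset.range ν₁, Real.log (c i j) ≤ (ν₁:ℝ) * Real.log (a i) := by
        calc ∑ j ∈ Finset.range ν₁, Real.log (c i j)
            ≤ ∑ _j ∈ Finset.range ν₁, Real.log (a i) := by
              apply Finset.sum_le_sum
              intro j hj
              rw [Finset.mem_range] at hj
              have hjn := lt_of_lt_of_le hj hν₁
              have hba : b j < a i := (h3 j hj).trans (h2 i hiν hi)
              have h := (hc i hi j hjn).2
              rw [max_eq_left hba.le] at h
              exact Real.log_le_log (hcpos i hi j hjn) h
          _ = (ν₁:ℝ) * Real.log (a i) := by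
              rw [Finset.sum_const, Finset.card_range, nsmul_eq_mul]
      have second : ∑ j ∈ Finset.Ico ν₁ n, Real.log (c i j) ≤ 0 :=
        Finset.sum_nonpos fun j hj => hclog0 i hi j (Finset.mem_Ico.mp hj).2
      linarith
  calc ∑ i ∈ Finset.range m, ∑ j ∈ Finset.range n, Real.log (c i j)
      ≤ ∑ i ∈ Finset.range m, (if i < ν₀ then ∑ j ∈ Finset.Ico ν₁ n, Real.log (b j)
          else (ν₁:ℝ) * Real.log (a i)) := Finset.sum_le_sum key
    _ = (ν₁ : ℝ) * ∑ i ∈ Finset.Ico ν₀ m, Real.log (a i) +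
        (ν₀ : ℝ) * ∑ j ∈ Finset.Ico ν₁ n, Real.log (b j) := by
        rw [← Finset.sum_range_add_sum_Ico _ hν₀]
        have e1 : ∑ i ∈ Finset.range ν₀, (if i < ν₀ then ∑ j ∈ Finset.Ico ν₁ n, Real.log (b j)
            else (ν₁:ℝ) * Real.log (a i)) = (ν₀:ℝ) * ∑ j ∈ Finset.Ico ν₁ n, Real.log (b j) := by
          rw [Finset.sum_congr rfl fun i hi => if_pos (Finset.mem_range.mp hi),
            Finset.sum_const, Finset.card_range, nsmul_eq_mul]
        have e2 : ∑ i ∈ Finset.Ico ν₀ m, (if i < ν₀ then ∑ j ∈ Finset.Ico ν₁ n, Real.log (b j)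
            else (ν₁:ℝ) * Real.log (a i)) = (ν₁:ℝ) * ∑ i ∈ Finset.Ico ν₀ m, Real.log (a i) := by
          rw [Finset.sum_congr rfl fun i hi => if_neg (not_lt.mpr (Finset.mem_Ico.mp hi).1),
            ← Finset.mul_sum]
        rw [e1, e2]; ring
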